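/- Let P be a real polynomial of degree q ≥ 1 with positive leading coefficient, and for each sufficiently large integer n let N(n) be the greatest positive integer i such that P(i) ≤ n. Then for every x ∈ (0,1], the proportion (1/N(n))·#{i ∈ ℕ : 1 ≤ i ≤ N(n) and P(i) ≤ n·x} tends to x^{1/q} as n → ∞. -/

import Mathlib

open Filter Topology Polynomial

/-- The ratio `P(t)/t^deg` tends to the leading coefficient. -/
lemma aux_ratio_tendsto (P : Polynomial ℝ) (ha0 : 0 < P.leadingCoeff) :
    Tendsto (fun t : ℝ => P.eval t / t ^ P.natDegree) atTop (𝓝 P.leadingCoeff) := by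
  have hne : ∀ᶠ t : ℝ in atTop, P.leadingCoeff * t ^ P.natDegree ≠ 0 := by
    filter_upwards [eventually_gt_atTop (0 : ℝ)] with t ht
    exact ne_of_gt (mul_pos ha0 (pow_pos ht _))
  have h1 := (Asymptotics.isEquivalent_iff_tendsto_one hne).1 P.isEquivalent_atTop_lead
  have h2 := h1.const_mul P.leadingCoeff
  rw [mul_one] at h2
  refine h2.congr' ?_
  filter_upwards [eventually_gt_atTop (0 : ℝ)] with t ht
  simp only [Pi.div_apply]
  rw [show P.leadingCoeff * (P.eval t / (P.leadingCoeff * t ^ P.natDegree))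
      = P.leadingCoeff * P.eval t / (P.leadingCoeff * t ^ P.natDegree) from
    (mul_div_assoc _ _ _).symm, mul_div_mul_left _ _ (ne_of_gt ha0)]

/-- Key lemma: if `P(K n) ≤ y n < P(K n + 1)` and `y → ∞`, then
`K n / (y n)^(1/q)` tends to `leadingCoeff^(-1/q)`. -/
lemma aux_key (P : Polynomial ℝ) (q : ℕ) (hq : P.natDegree = q) (hq1 : 1 ≤ q)
    (ha0 : 0 < P.leadingCoeff) (y : ℕ → ℝ) (hy : Tendsto y atTop atTop) (K : ℕ → ℕ)
    (hK : ∀ᶠ n in atTop, P.eval (K n : ℝ) ≤ y n ∧ y n < P.eval ((K n : ℝ) + 1)) :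
    Tendsto (fun n => (K n : ℝ) / (y n) ^ ((1 : ℝ) / q)) atTop
      (𝓝 ((P.leadingCoeff ^ ((1 : ℝ) / q))⁻¹)) := by
  have hq0 : (q : ℝ) ≠ 0 := Nat.cast_ne_zero.2 (by omega)
  set a := P.leadingCoeff with ha
  -- K tends to infinity
  have hKtop : Tendsto (fun n => (K n : ℝ)) atTop atTop := by
    have hKn : Tendsto K atTop atTop := by
      refine tendsto_atTop.2 fun m => ?_
      have hnonempty : (Finset.range (m + 1)).Nonempty := ⟨0, Finset.mem_range.2 (by omega)⟩
      set C := (Finset.range (m + 1)).sup' hnonempty (fun j => P.eval ((j : ℝ) + 1)) with hC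
      filter_upwards [hy.eventually_ge_atTop C, hK] with n h1 h2
      by_contra hc
      push_neg at hc
      have hm : K n ∈ Finset.range (m + 1) := Finset.mem_range.2 (by omega)
      have hle := Finset.le_sup' (fun j : ℕ => P.eval ((j : ℝ) + 1)) hm
      exact absurd (h2.2.trans_le (hle.trans h1)) (lt_irrefl _)
    exact tendsto_natCast_atTop_atTop.comp hKn
  have hrat : Tendsto (fun t : ℝ => P.eval t / t ^ q) atTop (𝓝 a) := by
    rw [← hq]; exact aux_ratio_tendsto P ha0
  have h2 : Tendsto (fun n => P.eval ((K n : ℝ)) / (K n : ℝ) ^ q) atTop (𝓝 a) :=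
    hrat.comp hKtop
  have hK1top : Tendsto (fun n => (K n : ℝ) + 1) atTop atTop :=
    tendsto_atTop_add_const_right _ 1 hKtop
  have h3 : Tendsto (fun n => P.eval ((K n : ℝ) + 1) / ((K n : ℝ) + 1) ^ q) atTop (𝓝 a) :=
    hrat.comp hK1top
  have h4 : Tendsto (fun n => ((K n : ℝ) + 1) / (K n : ℝ)) atTop (𝓝 1) := by
    have hinv : Tendsto (fun n => ((K n : ℝ))⁻¹) atTop (𝓝 0) := hKtop.inv_tendsto_atTop
    have h := hinv.const_add 1
    rw [add_zero] at h
    refine h.congr' ?_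
    filter_upwards [hKtop.eventually_gt_atTop 0] with n hn
    field_simp
  have h4q : Tendsto (fun n => (((K n : ℝ) + 1) / (K n : ℝ)) ^ q) atTop (𝓝 1) := by
    simpa using h4.pow q
  have h5 : Tendsto (fun n => P.eval ((K n : ℝ) + 1) / (K n : ℝ) ^ q) atTop (𝓝 a) := by
    have h := h3.mul h4q
    rw [mul_one] at h
    refine h.congr' ?_
    filter_upwards [hKtop.eventually_gt_atTop 0] with n hn
    have hk0 : ((K n : ℝ)) ≠ 0 := ne_of_gt hn
    have hk10 : ((K n : ℝ) + 1) ≠ 0 := by positivity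
    rw [div_pow]
    field_simp
  have h6 : Tendsto (fun n => y n / (K n : ℝ) ^ q) atTop (𝓝 a) := by
    refine tendsto_of_tendsto_of_tendsto_of_le_of_le' h2 h5 ?_ ?_
    · filter_upwards [hK, hKtop.eventually_gt_atTop 0] with n h hn
      exact (div_le_div_iff_of_pos_right (pow_pos hn q)).2 h.1
    · filter_upwards [hK, hKtop.eventually_gt_atTop 0] with n h hn
      exact (div_le_div_iff_of_pos_right (pow_pos hn q)).2 h.2.le
  have h7 : Tendsto (fun n => (y n / (K n : ℝ) ^ q) ^ ((1 : ℝ) / q)) atTop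
      (𝓝 (a ^ ((1 : ℝ) / q))) := h6.rpow_const (Or.inl (ne_of_gt ha0))
  have h8 : Tendsto (fun n => (y n) ^ ((1 : ℝ) / q) / (K n : ℝ)) atTop
      (𝓝 (a ^ ((1 : ℝ) / q))) := by
    refine h7.congr' ?_
    filter_upwards [hy.eventually_gt_atTop 0, hKtop.eventually_gt_atTop 0] with n hyn hkn
    rw [Real.div_rpow hyn.le (by positivity)]
    congr 1
    rw [← Real.rpow_natCast (K n : ℝ) q, ← Real.rpow_mul hkn.le, mul_one_div,
      div_self hq0, Real.rpow_one]
  have hne : a ^ ((1 : ℝ) / q) ≠ 0 := ne_of_gt (Real.rpow_pos_of_pos ha0 _)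
  have h9 := h8.inv₀ hne
  exact h9.congr fun n => inv_div _ _

/-- If `P` is a real polynomial of degree `q ≥ 1` with positive leading
coefficient, and `N n` is (for all sufficiently large `n`) the greatest positive
integer `i` with `P(i) ≤ n`, then for every `x ∈ (0,1]` the proportion of
`1 ≤ i ≤ N(n)` with `P(i) ≤ n·x` tends to `x^{1/q}`. -/
theorem tendsto_proportion_P_le_nx
    (P : Polynomial ℝ) (q : ℕ) (hq : P.natDegree = q) (hq1 : 1 ≤ q)
    (ha0 : 0 < P.leadingCoeff)
    (N : ℕ → ℕ)
    (hN : ∀ᶠ n : ℕ in atTop,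
      1 ≤ N n ∧ P.eval ((N n : ℝ)) ≤ (n : ℝ) ∧
        ∀ i : ℕ, 1 ≤ i → P.eval ((i : ℝ)) ≤ (n : ℝ) → i ≤ N n)
    (x : ℝ) (hx : x ∈ Set.Ioc (0 : ℝ) 1) :
    Tendsto
      (fun n : ℕ =>
        (((Finset.Icc 1 (N n)).filter fun i : ℕ => P.eval ((i : ℝ)) ≤ (n : ℝ) * x).card : ℝ)
          / (N n : ℝ))
      atTop (𝓝 (x ^ ((1 : ℝ) / q))) := by
  classical
  obtain ⟨hx0, hx1⟩ := hx
  set a := P.leadingCoeff with ha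
  -- property of N as bracketing sequence
  have hNev : ∀ᶠ n : ℕ in atTop,
      P.eval (N n : ℝ) ≤ (n : ℝ) ∧ (n : ℝ) < P.eval ((N n : ℝ) + 1) := by
    filter_upwards [hN] with n hn
    obtain ⟨h1, h2, h3⟩ := hn
    refine ⟨h2, ?_⟩
    by_contra hc
    push_neg at hc
    have := h3 (N n + 1) (by omega) (by push_cast; exact hc)
    omega
  have A := aux_key P q hq hq1 ha0 (fun n => (n : ℝ)) tendsto_natCast_atTop_atTop N hNev
  -- derivative is eventually positive, hence P eventually monotone
  have hdeg : P.derivative.natDegree = q - 1 := by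
    have := Polynomial.degree_derivative_eq P (by omega)
    exact Polynomial.natDegree_eq_of_degree_eq_some (by rw [this, hq])
  have hlc : 0 < P.derivative.leadingCoeff := by
    have h1 : P.derivative.leadingCoeff = P.coeff q * ((q - 1 : ℕ) + 1 : ℝ) := by
      rw [Polynomial.leadingCoeff, hdeg, Polynomial.coeff_derivative,
        show q - 1 + 1 = q from by omega]
    have h2 : P.coeff q = a := by rw [← hq]; exact Polynomial.coeff_natDegree
    rw [h1, h2]
    exact mul_pos ha0 (by positivity)
  have hdpos : ∀ᶠ t : ℝ in atTop, 0 < P.derivative.eval t := by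
    have hr := aux_ratio_tendsto P.derivative hlc
    filter_upwards [hr.eventually (eventually_gt_nhds hlc), eventually_gt_atTop (0 : ℝ)]
      with t h1 h2
    by_contra hc
    push_neg at hc
    have hp : (0 : ℝ) < t ^ P.derivative.natDegree := pow_pos h2 _
    have := div_nonpos_of_nonpos_of_nonneg hc hp.le
    linarith
  obtain ⟨T₀, hT₀⟩ := eventually_atTop.1 hdpos
  set T := max T₀ 1 with hT
  have hT1 : (1 : ℝ) ≤ T := le_max_right _ _
  have hmono : MonotoneOn (fun t => P.eval t) (Set.Ici T) := by
    refine (strictMonoOn_of_deriv_pos (convex_Ici T)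
      ((Polynomial.continuous P).continuousOn) ?_).monotoneOn
    intro t ht
    rw [interior_Ici] at ht
    rw [Polynomial.deriv]
    exact hT₀ t (le_trans (le_max_left _ _) ht.le)
  set Tn := ⌈T⌉₊ with hTn
  have hTn1 : 1 ≤ Tn := Nat.one_le_ceil_iff.2 (by linarith)
  have hTTn : T ≤ (Tn : ℝ) := Nat.le_ceil T
  have hnonempty : (Finset.range (Tn + 1)).Nonempty := ⟨0, Finset.mem_range.2 (by omega)⟩
  set C := (Finset.range (Tn + 1)).sup' hnonempty (fun j => P.eval (j : ℝ)) with hC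
  have hyx : Tendsto (fun n : ℕ => (n : ℝ) * x) atTop atTop :=
    tendsto_natCast_atTop_atTop.atTop_mul_const hx0
  set M : ℕ → ℕ := fun n => Nat.findGreatest (fun i => P.eval (i : ℝ) ≤ (n : ℝ) * x) (N n)
    with hM
  have hEv : ∀ᶠ n : ℕ in atTop,
      (1 ≤ M n ∧ M n ≤ N n ∧ P.eval (M n : ℝ) ≤ (n : ℝ) * x ∧
        (n : ℝ) * x < P.eval ((M n : ℝ) + 1)) ∧
      ((Finset.Icc 1 (N n)).filter fun i : ℕ => P.eval (i : ℝ) ≤ (n : ℝ) * x)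
        = Finset.Icc 1 (M n) := by
    filter_upwards [hN, hyx.eventually_ge_atTop C] with n hn hCn
    obtain ⟨hN1, hNle, hNmax⟩ := hn
    have hjC : ∀ j : ℕ, j ≤ Tn → P.eval (j : ℝ) ≤ (n : ℝ) * x := fun j hj =>
      le_trans (Finset.le_sup' (f := fun j : ℕ => P.eval (j : ℝ))
        (Finset.mem_range.2 (by omega))) hCn
    have h1pred : P.eval ((1 : ℕ) : ℝ) ≤ (n : ℝ) * x := hjC 1 hTn1
    have hM1 : 1 ≤ M n := Nat.le_findGreatest hN1 h1pred
    have hMN : M n ≤ N n := Nat.findGreatest_le _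
    have hMle : P.eval (M n : ℝ) ≤ (n : ℝ) * x := Nat.findGreatest_spec (P := fun i => P.eval (i : ℝ) ≤ (n : ℝ) * x) hN1 h1pred
    have hMlt : (n : ℝ) * x < P.eval ((M n : ℝ) + 1) := by
      rcases le_or_gt (M n + 1) (N n) with h | h
      · have hng := Nat.findGreatest_is_greatest (Nat.lt_succ_self (M n)) h
        push_neg at hng
        have : P.eval ((↑(M n + 1) : ℝ)) = P.eval ((M n : ℝ) + 1) := by push_cast; ring_nf
        rw [← this]
        exact hng
      · have hMeq : M n = N n := le_antisymm hMN (by omega)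
        by_contra hc
        push_neg at hc
        have hle' : P.eval ((↑(N n + 1) : ℝ)) ≤ (n : ℝ) := by
          push_cast
          rw [← hMeq] at *
          calc P.eval ((M n : ℝ) + 1) ≤ (n : ℝ) * x := hc
            _ ≤ (n : ℝ) * 1 := by
                exact mul_le_mul_of_nonneg_left hx1 (Nat.cast_nonneg n)
            _ = (n : ℝ) := mul_one _
        have := hNmax (N n + 1) (by omega) hle'
        omega
    refine ⟨⟨hM1, hMN, hMle, hMlt⟩, ?_⟩
    ext i
    simp only [Finset.mem_filter, Finset.mem_Icc]
    constructor
    · rintro ⟨⟨h1, h2⟩, h3⟩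
      exact ⟨h1, Nat.le_findGreatest h2 h3⟩
    · rintro ⟨h1, h2⟩
      refine ⟨⟨h1, le_trans h2 hMN⟩, ?_⟩
      rcases le_or_gt i Tn with h | h
      · exact hjC i h
      · have hTi : T ≤ (i : ℝ) := le_trans hTTn (by exact_mod_cast h.le)
        have hiM : (i : ℝ) ≤ (M n : ℝ) := by exact_mod_cast h2
        have hTM : T ≤ (M n : ℝ) := le_trans hTi hiM
        exact le_trans (hmono (Set.mem_Ici.2 hTi) (Set.mem_Ici.2 hTM) hiM) hMle
  have hMev : ∀ᶠ n in atTop,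
      P.eval (M n : ℝ) ≤ (n : ℝ) * x ∧ (n : ℝ) * x < P.eval ((M n : ℝ) + 1) :=
    hEv.mono fun n h => ⟨h.1.2.2.1, h.1.2.2.2⟩
  have B := aux_key P q hq hq1 ha0 (fun n => (n : ℝ) * x) hyx M hMev
  have hane : (a ^ ((1 : ℝ) / q))⁻¹ ≠ 0 :=
    inv_ne_zero (ne_of_gt (Real.rpow_pos_of_pos ha0 _))
  have hcomb := (B.mul_const (x ^ ((1 : ℝ) / q))).div A hane
  have hval : (a ^ ((1 : ℝ) / q))⁻¹ * x ^ ((1 : ℝ) / q) / (a ^ ((1 : ℝ) / q))⁻¹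
      = x ^ ((1 : ℝ) / q) := mul_div_cancel_left₀ _ hane
  rw [hval] at hcomb
  refine Tendsto.congr' ?_ hcomb
  filter_upwards [hEv, hN, eventually_ge_atTop 1] with n hev hn hn1
  obtain ⟨⟨hM1, hMN, _, _⟩, hset⟩ := hev
  obtain ⟨hN1, -, -⟩ := hn
  simp only [Pi.div_apply]
  rw [hset, Nat.card_Icc, Nat.add_sub_cancel]
  have e1 : ((n : ℝ) * x) ^ ((1 : ℝ) / q) = (n : ℝ) ^ ((1 : ℝ) / q) * x ^ ((1 : ℝ) / q) :=
    Real.mul_rpow (Nat.cast_nonneg n) hx0.le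
  have hn0 : (0 : ℝ) < (n : ℝ) ^ ((1 : ℝ) / q) :=
    Real.rpow_pos_of_pos (by exact_mod_cast hn1) _
  have hx0' : (0 : ℝ) < x ^ ((1 : ℝ) / q) := Real.rpow_pos_of_pos hx0 _
  have hN0 : (0 : ℝ) < (N n : ℝ) := by exact_mod_cast hN1
  rw [e1]
  field_simp
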